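/- Let K be an algebraically closed field with char(K) ≠ 2 and let A be a symmetric n×n matrix over K which is principally regular, i.e., det(A_{I,I}) ≠ 0 for every nonempty subset I ⊆ [n], where A_{I,I} denotes the principal submatrix of A on rows and columns I. If A_{ij}·(A^{-1})_{ij} = 0 for all 1 ≤ i < j ≤ n, then A is a diagonal matrix. -/
import Mathlib


open scoped Classical

/-- Let `K` be an algebraically closed field of characteristic different from `2` and let
`A` be a symmetric `n × n` matrix over `K` which is principally regular, i.e. all its
principal minors are nonzero. If `A_{ij} · (A⁻¹)_{ij} = 0` for all `i < j`, then `A` is a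
diagonal matrix. -/
theorem principally_regular_symmetric_diagonal
    (K : Type*) [Field K] [IsAlgClosed K] (hchar : ringChar K ≠ 2)
    (n : ℕ) (hn : 1 ≤ n) (A : Matrix (Fin n) (Fin n) K)
    (hsymm : A.IsSymm)
    (hpr : ∀ s : Finset (Fin n), s.Nonempty →
      (A.submatrix (fun i : {x : Fin n // x ∈ s} => (i : Fin n))
        (fun i : {x : Fin n // x ∈ s} => (i : Fin n))).det ≠ 0)
    (hzero : ∀ i j : Fin n, i < j → A i j * A⁻¹ i j = 0) :
    A.IsDiag := by
  set B := A⁻¹ with hB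
  -- determinant of A is nonzero
  have hdet : A.det ≠ 0 := by
    have h := hpr Finset.univ ⟨⟨0, hn⟩, Finset.mem_univ _⟩
    rwa [show (fun i : {x : Fin n // x ∈ (Finset.univ : Finset (Fin n))} => (i : Fin n)) =
        ⇑(Equiv.subtypeUnivEquiv (fun x : Fin n => Finset.mem_univ x)) from rfl,
      Matrix.det_submatrix_equiv_self] at h
  have hunit : IsUnit A.det := isUnit_iff_ne_zero.mpr hdet
  have hAB : A * B = 1 := Matrix.mul_nonsing_inv A hunit
  have hBA : B * A = 1 := Matrix.nonsing_inv_mul A hunit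
  have hBsymm : B.IsSymm := by
    rw [Matrix.IsSymm, hB, Matrix.transpose_nonsing_inv, hsymm.eq]
  -- the vanishing condition holds for all pairs of distinct indices
  have hzero' : ∀ i j : Fin n, i ≠ j → A i j * B i j = 0 := by
    intro i j hij
    rcases lt_or_gt_of_ne hij with h | h
    · exact hzero i j h
    · have := hzero j i h
      rwa [← hsymm.apply, ← hBsymm.apply] at this
  -- the inverse matrix is diagonal
  have hBdiag : ∀ i k : Fin n, i ≠ k → B i k = 0 := by
    intro i k hik
    by_contra hBik
    set T : Finset (Fin n) := Finset.univ.filter (fun j => j ≠ k ∧ B j k ≠ 0) with hT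
    have hiT : i ∈ T := by simp [hT, hik, hBik]
    set M := A.submatrix (fun p : {x : Fin n // x ∈ T} => (p : Fin n))
        (fun p : {x : Fin n // x ∈ T} => (p : Fin n)) with hM
    have hMdet : M.det ≠ 0 := hpr T ⟨i, hiT⟩
    set w : {x : Fin n // x ∈ T} → K := fun p => B (p : Fin n) k with hw
    have hMw : M.mulVec w = 0 := by
      funext p
      obtain ⟨p, hp⟩ := p
      have hpk : p ≠ k := (Finset.mem_filter.mp hp).2.1
      have hBpk : B p k ≠ 0 := (Finset.mem_filter.mp hp).2.2
      have hApk : A p k = 0 := by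
        have h0 := hzero' p k hpk
        rcases mul_eq_zero.mp h0 with h | h
        · exact h
        · exact absurd h hBpk
      have hsum : ∑ j ∈ T, A p j * B j k = ∑ j, A p j * B j k := by
        apply Finset.sum_subset (Finset.subset_univ T)
        intro j _ hj
        by_cases hjk : j = k
        · subst hjk; rw [hApk, zero_mul]
        · have hBjk : B j k = 0 := by
            by_contra h
            exact hj (by simp [hT, hjk, h])
          rw [hBjk, mul_zero]
      have h1 : M.mulVec w ⟨p, hp⟩ = ∑ j ∈ T, A p j * B j k := by
        rw [Matrix.mulVec, dotProduct]
        rw [← Finset.sum_attach T (fun j => A p j * B j k)]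
        rfl
      have h2 : (∑ j, A p j * B j k) = (A * B) p k := (Matrix.mul_apply).symm
      rw [Pi.zero_apply, h1, hsum, h2, hAB, Matrix.one_apply_ne hpk]
    have hw0 : w = 0 := Matrix.eq_zero_of_mulVec_eq_zero hMdet hMw
    exact hBik (congrFun hw0 ⟨i, hiT⟩)
  -- conclude that A is diagonal
  intro i j hij
  have hBjj : B j j ≠ 0 := by
    intro h0
    have h1 : (B * A) j j = (1 : Matrix (Fin n) (Fin n) K) j j := by rw [hBA]
    rw [Matrix.mul_apply, Matrix.one_apply_eq] at h1
    have h2 : ∀ l, B j l * A l j = 0 := by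
      intro l
      by_cases hlj : l = j
      · subst hlj; rw [h0, zero_mul]
      · rw [hBdiag j l (Ne.symm hlj), zero_mul]
    rw [Finset.sum_congr rfl (fun l _ => h2 l), Finset.sum_const_zero] at h1
    exact one_ne_zero h1.symm
  have h1 : (A * B) i j = 0 := by rw [hAB]; exact Matrix.one_apply_ne hij
  rw [Matrix.mul_apply] at h1
  have h2 : ∀ l ∈ Finset.univ, l ≠ j → A i l * B l j = 0 := by
    intro l _ hlj
    rw [hBdiag l j hlj, mul_zero]
  rw [Finset.sum_eq_single j h2 (by simp)] at h1
  exact (mul_eq_zero.mp h1).resolve_right hBjj
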